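/- Let X be a complete metric space and f : (0, ∞) → X continuous such that for every x > 0 the sequence f(n·x) converges in X. Then f(x) converges as x → ∞. -/

import Mathlib

open Filter Set Metric Topology

theorem croft_complete_metric {X : Type*} [MetricSpace X] [CompleteSpace X]
    (f : ℝ → X) (hf : ContinuousOn f (Set.Ioi (0:ℝ)))
    (h : ∀ x > (0:ℝ), ∃ L : X, Filter.Tendsto (fun n : ℕ => f (n * x)) Filter.atTop (nhds L)) :
    ∃ L : X, Filter.Tendsto f Filter.atTop (nhds L) := by
  choose L hL using h
  -- key rational-scaling lemma : limits at commensurable points agree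
  have key : ∀ (x : ℝ) (hx : 0 < x) (p d : ℕ) (_ : 0 < p) (_ : 0 < d)
      (hpx : 0 < ((p : ℝ) / (d : ℝ)) * x), L (((p : ℝ) / (d : ℝ)) * x) hpx = L x hx := by
    intro x hx p d hp hd hpx
    have hmul : ∀ c : ℕ, 0 < c → Tendsto (fun m : ℕ => m * c) atTop atTop := by
      intro c hc
      apply tendsto_atTop_atTop.2
      intro b
      exact ⟨b, fun a ha => le_trans ha (Nat.le_mul_of_pos_right a hc)⟩
    have h1 : Tendsto (fun m : ℕ => f (((m * d : ℕ) : ℝ) * (((p:ℝ)/(d:ℝ)) * x))) atTop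
        (𝓝 (L (((p:ℝ)/(d:ℝ)) * x) hpx)) :=
      (hL _ hpx).comp (hmul d hd)
    have h2 : Tendsto (fun m : ℕ => f (((m * p : ℕ) : ℝ) * x)) atTop (𝓝 (L x hx)) :=
      (hL x hx).comp (hmul p hp)
    have heq : (fun m : ℕ => f (((m * d : ℕ) : ℝ) * (((p:ℝ)/(d:ℝ)) * x)))
        = fun m : ℕ => f (((m * p : ℕ) : ℝ) * x) := by
      funext m
      congr 1
      have hd0 : (d : ℝ) ≠ 0 := by positivity
      push_cast
      field_simp
    rw [heq] at h1
    exact tendsto_nhds_unique h1 h2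
  have hcauchy : Cauchy (Filter.map f Filter.atTop) := by
    rw [Metric.cauchy_iff]
    refine ⟨Filter.map_neBot, ?_⟩
    intro ε0 hε0
    set ε := ε0 / 9 with hεdef
    have hε : 0 < ε := by positivity
    set E : ℕ → Set ℝ := fun N => {x ∈ Icc (1:ℝ) 2 | ∀ m n : ℕ, N + 1 ≤ m → N + 1 ≤ n →
      dist (f (m * x)) (f (n * x)) ≤ ε} with hE
    have hEclosed : ∀ N, IsClosed (E N) := by
      intro N
      have hrw : E N = ⋂ (m : ℕ) (n : ℕ), (Icc (1:ℝ) 2 ∩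
          (fun x => dist (f (((m + (N+1) : ℕ) : ℝ) * x)) (f (((n + (N+1) : ℕ) : ℝ) * x))) ⁻¹'
            Iic ε) := by
        ext x
        simp only [hE, mem_iInter, mem_inter_iff, mem_setOf_eq, mem_preimage, mem_Iic]
        constructor
        · rintro ⟨hx, hx2⟩ m n
          exact ⟨hx, hx2 _ _ (by omega) (by omega)⟩
        · intro hx
          refine ⟨(hx 0 0).1, fun m n hm hn => ?_⟩
          have := (hx (m - (N+1)) (n - (N+1))).2
          rwa [Nat.sub_add_cancel hm, Nat.sub_add_cancel hn] at this
      rw [hrw]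
      refine isClosed_iInter fun m => isClosed_iInter fun n => ?_
      have hmaps : ∀ k : ℕ, 1 ≤ k → MapsTo (fun x : ℝ => ((k : ℕ) : ℝ) * x) (Icc 1 2) (Ioi 0) := by
        intro k hk x hx
        have hk0 : (0:ℝ) < (k:ℝ) := by exact_mod_cast hk
        exact mul_pos hk0 (lt_of_lt_of_le one_pos hx.1)
      have hcont : ContinuousOn
          (fun x => dist (f (((m + (N+1) : ℕ) : ℝ) * x)) (f (((n + (N+1) : ℕ) : ℝ) * x)))
          (Icc (1:ℝ) 2) :=
        by have := continuous_dist.comp_continuousOn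
              (ContinuousOn.prodMk (hf.comp ((continuous_const.mul continuous_id).continuousOn) (hmaps (m + (N+1)) (by omega)))
               (hf.comp ((continuous_const.mul continuous_id).continuousOn) (hmaps (n + (N+1)) (by omega))))
           exact this
      exact hcont.preimage_isClosed_of_isClosed isClosed_Icc isClosed_Iic
    have hcover : ⋃ N, (Subtype.val ⁻¹' E N : Set (Icc (1:ℝ) 2)) = univ := by
      rw [eq_univ_iff_forall]
      rintro ⟨x, hx⟩
      have hx0 : 0 < x := lt_of_lt_of_le one_pos hx.1
      have hc : CauchySeq (fun n : ℕ => f (n * x)) := (hL x hx0).cauchySeq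
      obtain ⟨N, hN⟩ := Metric.cauchySeq_iff.1 hc ε hε
      refine mem_iUnion.2 ⟨N, ?_⟩
      exact ⟨hx, fun m n hm hn => (hN m (by omega) n (by omega)).le⟩
    haveI : CompleteSpace (Icc (1:ℝ) 2) := isClosed_Icc.completeSpace_coe
    haveI : Nonempty (Icc (1:ℝ) 2) := ⟨⟨1, by norm_num⟩⟩
    obtain ⟨N, hNint⟩ := nonempty_interior_of_iUnion_of_closed
      (fun N => (hEclosed N).preimage continuous_subtype_val) hcover
    obtain ⟨⟨x, hxmem⟩, hxint⟩ := hNint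
    rw [mem_interior_iff_mem_nhds, Metric.mem_nhds_iff] at hxint
    obtain ⟨r, hr, hball⟩ := hxint
    have hsub : ∀ y ∈ Icc (1:ℝ) 2, |y - x| < r → y ∈ E N := by
      intro y hy hyr
      have hmem : (⟨y, hy⟩ : Icc (1:ℝ) 2) ∈ ball (⟨x, hxmem⟩ : Icc (1:ℝ) 2) r := by
        rw [mem_ball, Subtype.dist_eq, Real.dist_eq]; exact hyr
      exact hball hmem
    have hx1 : 1 ≤ x := hxmem.1
    have hx2 : x ≤ 2 := hxmem.2
    set a := max (x - r/2) 1 with hadef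
    set b := min (x + r/2) 2 with hbdef
    have ha1 : 1 ≤ a := le_max_right _ _
    have ha0 : 0 < a := lt_of_lt_of_le one_pos ha1
    have hb2 : b ≤ 2 := min_le_right _ _
    have hab : a < b :=
      lt_min (max_lt (by linarith) (by linarith)) (max_lt (by linarith) one_lt_two)
    have haxr : x - r/2 ≤ a := le_max_left _ _
    have hbxr : b ≤ x + r/2 := min_le_left _ _
    have hIab : Icc a b ⊆ E N := by
      intro y hy
      have hy12 : y ∈ Icc (1:ℝ) 2 := ⟨le_trans ha1 hy.1, le_trans hy.2 hb2⟩
      apply hsub y hy12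
      rw [abs_sub_lt_iff]
      constructor
      · linarith [hy.2]
      · linarith [hy.1]
    set N' := N + 1 with hN'
    have hN'1 : 1 ≤ N' := by omega
    have hN'0 : (0:ℝ) < (N' : ℝ) := by exact_mod_cast hN'1
    have hP1 : ∀ y ∈ Icc a b, ∀ m n : ℕ, N' ≤ m → N' ≤ n →
        dist (f (m * y)) (f (n * y)) ≤ ε := fun y hy => (hIab hy).2
    have hP2 : ∀ y, y ∈ Icc a b → ∀ (hy0 : 0 < y), ∀ n : ℕ, N' ≤ n →
        dist (f (n * y)) (L y hy0) ≤ ε := by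
      intro y hy hy0 n hn
      have htd : Tendsto (fun m : ℕ => dist (f (n*y)) (f (m*y))) atTop
          (𝓝 (dist (f (n*y)) (L y hy0))) := tendsto_const_nhds.dist (hL y hy0)
      apply le_of_tendsto htd
      filter_upwards [eventually_ge_atTop N'] with m hm
      exact hP1 y hy n m hn hm
    have hP3 : ∀ y, y ∈ Icc a b → ∀ (hy0 : 0 < y), ∀ z, z ∈ Icc a b → ∀ (hz0 : 0 < z),
        dist (L y hy0) (L z hz0) ≤ 3 * ε := by
      intro y hy hy0 z hz hz0
      have hNz : ((N' : ℕ) : ℝ) * z ∈ Ioi (0:ℝ) := mul_pos hN'0 hz0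
      have hcw := hf _ hNz
      rw [Metric.continuousWithinAt_iff] at hcw
      obtain ⟨δ, hδ, hδf⟩ := hcw ε hε
      set δ' := δ / (3 * N') with hδ'def
      have hδ' : 0 < δ' := by positivity
      set c := max a (z - δ') with hcdef
      set d := min b (z + δ') with hddef
      have hcz : c ≤ z := max_le hz.1 (by linarith)
      have hzd : z ≤ d := le_min hz.2 (by linarith)
      have hac : a ≤ c := le_max_left _ _
      have hdb : d ≤ b := min_le_left _ _
      have hcd : c < d :=
        lt_min (max_lt hab (by linarith [hz.2])) (max_lt (by linarith [hz.1]) (by linarith))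
      have hcdel : z - δ' ≤ c := le_max_right _ _
      have hddel : d ≤ z + δ' := min_le_right _ _
      have hc0 : 0 < c := lt_of_lt_of_le ha0 hac
      obtain ⟨q, hq1, hq2⟩ := exists_rat_btwn (by gcongr : c / y < d / y)
      have hcy0 : 0 < c / y := div_pos hc0 hy0
      have hq0 : (0:ℝ) < (q:ℝ) := lt_trans hcy0 hq1
      have hqpos : 0 < q := by exact_mod_cast hq0
      set p := q.num.toNat with hpdef
      have hp : 0 < p := by
        have := Rat.num_pos.2 hqpos
        omega
      have hd : 0 < q.den := q.pos
      have hqcast : (q:ℝ) = (p : ℝ) / (q.den : ℝ) := by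
        rw [Rat.cast_def]
        congr 1
        have : (q.num.toNat : ℤ) = q.num := Int.toNat_of_nonneg (Rat.num_pos.2 hqpos).le
        exact_mod_cast congrArg (fun z : ℤ => (z : ℝ)) this.symm
      set w : ℝ := ((p:ℝ)/(q.den:ℝ)) * y with hwdef
      have hwq : w = (q:ℝ) * y := by rw [hwdef, ← hqcast]
      have hw0 : 0 < w := by rw [hwq]; positivity
      have hcw' : c < w := by rw [hwq]; exact (div_lt_iff₀ hy0).1 hq1
      have hwd : w < d := by rw [hwq]; exact (lt_div_iff₀ hy0).1 hq2
      have hwab : w ∈ Icc a b := ⟨le_trans hac hcw'.le, le_trans hwd.le hdb⟩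
      have hkey : L w hw0 = L y hy0 := key y hy0 p q.den hp hd hw0
      have hwzd : dist (((N':ℕ):ℝ) * w) (((N':ℕ):ℝ) * z) < δ := by
        rw [Real.dist_eq, ← mul_sub, abs_mul, abs_of_pos hN'0]
        have habs : |w - z| ≤ 2 * δ' := by
          rw [abs_sub_le_iff]; constructor <;> linarith
        have : (N':ℝ) * |w - z| ≤ (N':ℝ) * (2 * δ') := by
          apply mul_le_mul_of_nonneg_left habs hN'0.le
        have h2 : (N':ℝ) * (2 * δ') = 2 * δ / 3 := by
          rw [hδ'def]; field_simp
        calc (N':ℝ) * |w - z| ≤ 2 * δ / 3 := by rw [← h2]; exact this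
          _ < δ := by linarith
      have hfwz : dist (f (((N':ℕ):ℝ) * w)) (f (((N':ℕ):ℝ) * z)) < ε :=
        hδf (mem_Ioi.2 (mul_pos hN'0 hw0)) hwzd
      calc dist (L y hy0) (L z hz0) = dist (L w hw0) (L z hz0) := by rw [hkey]
        _ ≤ dist (L w hw0) (f (((N':ℕ):ℝ) * w)) + dist (f (((N':ℕ):ℝ) * w)) (f (((N':ℕ):ℝ) * z))
            + dist (f (((N':ℕ):ℝ) * z)) (L z hz0) := dist_triangle4 _ _ _ _
        _ ≤ ε + ε + ε := by
            refine add_le_add (add_le_add ?_ hfwz.le) ?_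
            · rw [dist_comm]; exact hP2 w hwab hw0 N' le_rfl
            · exact hP2 z hz hz0 N' le_rfl
        _ = 3 * ε := by ring
    have haab : a ∈ Icc a b := ⟨le_refl a, hab.le⟩
    set M : ℕ := max N' ⌈a / (b - a)⌉₊ with hMdef
    have hM1 : N' ≤ M := le_max_left _ _
    have hM0 : 0 < M := lt_of_lt_of_le hN'1 hM1
    have hMba : a / (b - a) ≤ (M:ℝ) :=
      le_trans (Nat.le_ceil _) (by exact_mod_cast le_max_right N' ⌈a / (b - a)⌉₊)
    set T : ℝ := M * a with hTdef
    have hP5 : ∀ t, T ≤ t → dist (f t) (L a ha0) ≤ 4 * ε := by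
      intro t ht
      set n : ℕ := ⌊t / a⌋₊ with hndef
      have ht0 : 0 < t := lt_of_lt_of_le (by positivity : (0:ℝ) < (M:ℝ) * a) ht
      have hta : (M:ℝ) ≤ t / a := (le_div_iff₀ ha0).2 ht
      have hMn : M ≤ n := Nat.le_floor hta
      have hn0 : 0 < n := lt_of_lt_of_le hM0 hMn
      have hn0' : (0:ℝ) < (n:ℝ) := by exact_mod_cast hn0
      have hnt : (n:ℝ) * a ≤ t := by
        have := Nat.floor_le (le_of_lt (div_pos ht0 ha0))
        rw [← hndef] at this
        calc (n:ℝ) * a ≤ (t/a) * a := by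
              apply mul_le_mul_of_nonneg_right this ha0.le
          _ = t := by field_simp
      have htn : t < ((n:ℝ) + 1) * a := by
        have := Nat.lt_floor_add_one (t/a)
        rw [← hndef] at this
        calc t = (t/a) * a := by field_simp
          _ < ((n:ℝ) + 1) * a := by apply mul_lt_mul_of_pos_right (by exact_mod_cast this) ha0
      have hnab : a ≤ (n:ℝ) * (b - a) := by
        have hn' : a / (b - a) ≤ (n:ℝ) := le_trans hMba (by exact_mod_cast hMn)
        rw [div_le_iff₀ (by linarith)] at hn'
        linarith
      have hnb : t ≤ (n:ℝ) * b := by nlinarith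
      set x' := t / n with hx'def
      have hx'0 : 0 < x' := div_pos ht0 hn0'
      have hx'ab : x' ∈ Icc a b :=
        ⟨(le_div_iff₀ hn0').2 (by linarith), (div_le_iff₀ hn0').2 (by linarith)⟩
      have htx : t = (n:ℝ) * x' := by rw [hx'def, mul_div_assoc', mul_comm, mul_div_assoc, div_self hn0'.ne', mul_one]
      calc dist (f t) (L a ha0) ≤ dist (f t) (L x' hx'0) + dist (L x' hx'0) (L a ha0) :=
            dist_triangle _ _ _
        _ ≤ ε + 3*ε := add_le_add
            (by rw [htx]; exact hP2 x' hx'ab hx'0 n (le_trans hM1 hMn))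
            (hP3 x' hx'ab hx'0 a haab ha0)
        _ = 4*ε := by ring
    refine ⟨f '' Ici T, image_mem_map (Ici_mem_atTop T), ?_⟩
    rintro u ⟨t, ht, rfl⟩ v ⟨t', ht', rfl⟩
    calc dist (f t) (f t') ≤ dist (f t) (L a ha0) + dist (f t') (L a ha0) :=
          dist_triangle_right _ _ _
      _ ≤ 4*ε + 4*ε := add_le_add (hP5 t ht) (hP5 t' ht')
      _ < ε0 := by rw [hεdef] at *; linarith
  obtain ⟨l, hl⟩ := CompleteSpace.complete hcauchy
  exact ⟨l, hl⟩
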